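/- arXiv:2402.18940 — 2 statements merged into one kernel-verified Lean document; each statement's English description precedes it below -/
import Mathlib

section
/- For every t ∈ [0, 1), the binary-expansion map satisfies g(cos(πt)) = cos(π·frac(2t)), where frac(s) = s − ⌊s⌋ is the fractional part. -/
open Real

/-- One step of the Quantum Function-value Binary Expansion iteration:
`g(y) = 2y² − 1` if `y > 0` and `g(y) = 1 − 2y²` if `y ≤ 0`. -/
noncomputable def binExpStep (y : ℝ) : ℝ := if 0 < y then 2 * y ^ 2 - 1 else 1 - 2 * y ^ 2

/-- For every `t ∈ [0,1)`, the binary-expansion map satisfies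
`g(cos(πt)) = cos(π·frac(2t))`, where `frac` is the fractional part. -/
theorem binExpStep_cos (t : ℝ) (ht : t ∈ Set.Ico (0 : ℝ) 1) :
    binExpStep (Real.cos (Real.pi * t)) = Real.cos (Real.pi * Int.fract (2 * t)) := by
  obtain ⟨h0, h1⟩ := ht
  have hpi := Real.pi_pos
  rcases lt_or_ge t (1/2) with h | h
  · have hpos : 0 < Real.cos (Real.pi * t) := by
      apply Real.cos_pos_of_mem_Ioo
      constructor <;> nlinarith
    have hfr : Int.fract (2 * t) = 2 * t := Int.fract_eq_self.2 ⟨by linarith, by linarith⟩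
    rw [binExpStep, if_pos hpos, hfr]
    have : Real.pi * (2 * t) = 2 * (Real.pi * t) := by ring
    rw [this, Real.cos_two_mul]
  · have hnp : Real.cos (Real.pi * t) ≤ 0 := by
      apply Real.cos_nonpos_of_pi_div_two_le_of_le <;> nlinarith
    have hfr : Int.fract (2 * t) = 2 * t - 1 := by
      have : ⌊(2 * t : ℝ)⌋ = 1 := by
        apply Int.floor_eq_iff.2
        constructor <;> [push_cast; push_cast] <;> linarith
      rw [Int.fract, this]; push_cast; ring
    rw [binExpStep, if_neg (not_lt.2 hnp), hfr]
    have : Real.pi * (2 * t - 1) = 2 * (Real.pi * t) - Real.pi := by ring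
    rw [this, Real.cos_sub_pi, Real.cos_two_mul]
    ring
end

section
/- Let t ∈ [0, 1) and set x₀ = cos(πt), x_{k+1} = g(x_k). Then for every k ≥ 0, x_k ≤ 0 if and only if ⌊2^{k+1}·t⌋ is odd; i.e., the sign of the k-th iterate equals the (k+1)-th binary digit of t. Hence the sign pattern of the iterates computes the binary expansion of arccos(x)/π when x₀ = x = cos(πt). -/
open Real

private lemma cos_pos_of_lt_half {u : ℝ} (h0 : 0 ≤ u) (h : u < 1/2) :
    0 < Real.cos (Real.pi * u) := by
  apply Real.cos_pos_of_mem_Ioo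
  constructor
  · nlinarith [Real.pi_pos]
  · nlinarith [Real.pi_pos]

private lemma cos_nonpos_of_half_le {u : ℝ} (h : 1/2 ≤ u) (h1 : u < 1) :
    Real.cos (Real.pi * u) ≤ 0 := by
  apply Real.cos_nonpos_of_pi_div_two_le_of_le
  · nlinarith [Real.pi_pos]
  · nlinarith [Real.pi_pos]

private lemma xs_eq (t : ℝ) (ht : t ∈ Set.Ico (0 : ℝ) 1)
    (xs : ℕ → ℝ) (h0 : xs 0 = Real.cos (Real.pi * t))
    (hrec : ∀ k, xs (k + 1) = binExpStep (xs k)) :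
    ∀ k, xs k = Real.cos (Real.pi * Int.fract ((2 : ℝ) ^ k * t)) := by
  intro k
  induction k with
  | zero =>
    rw [h0]
    congr 1
    rw [pow_zero, one_mul]
    rw [Int.fract_eq_self.2 ⟨ht.1, ht.2⟩]
  | succ k ih =>
    set u := Int.fract ((2 : ℝ) ^ k * t) with hu
    have hu0 : 0 ≤ u := Int.fract_nonneg _
    have hu1 : u < 1 := Int.fract_lt_one _
    have hsplit : (2 : ℝ) ^ (k + 1) * t = ((2 * ⌊(2 : ℝ) ^ k * t⌋ : ℤ) : ℝ) + 2 * u := by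
      push_cast
      rw [hu, Int.fract]
      ring
    have hfr : Int.fract ((2 : ℝ) ^ (k + 1) * t) = Int.fract (2 * u) := by
      rw [hsplit, Int.fract_intCast_add]
    rw [hrec k, ih, binExpStep]
    by_cases hc : u < 1/2
    · have hpos : 0 < Real.cos (Real.pi * u) := cos_pos_of_lt_half hu0 hc
      rw [if_pos hpos]
      have h2u : Int.fract (2 * u) = 2 * u := Int.fract_eq_self.2 ⟨by linarith, by linarith⟩
      rw [hfr, h2u]
      have : Real.pi * (2 * u) = 2 * (Real.pi * u) := by ring
      rw [this, Real.cos_two_mul]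
    · push_neg at hc
      have hnp : ¬ (0 < Real.cos (Real.pi * u)) := by
        push_neg
        exact cos_nonpos_of_half_le hc hu1
      rw [if_neg hnp]
      have h2u : Int.fract (2 * u) = 2 * u - 1 := by
        have : Int.fract (2 * u) = Int.fract (2 * u - 1) := by
          rw [show (2:ℝ) * u - 1 = (-1 : ℤ) + 2 * u by push_cast; ring, Int.fract_intCast_add]
        rw [this, Int.fract_eq_self.2 ⟨by linarith, by linarith⟩]
      rw [hfr, h2u]
      have : Real.pi * (2 * u - 1) = 2 * (Real.pi * u) - Real.pi := by ring
      rw [this, Real.cos_sub_pi, Real.cos_two_mul]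
      ring

/-- For `t ∈ [0,1)` and the iteration `x₀ = cos(πt)`, `x_{k+1} = g(x_k)`, the `k`-th
iterate satisfies `x_k ≤ 0` iff `⌊2^{k+1}·t⌋` is odd; i.e. the sign of the `k`-th iterate
equals the `(k+1)`-th binary digit of `t`, so the sign pattern of the iterates computes
the binary expansion of `arccos(x)/π` when `x₀ = x = cos(πt)`. -/
theorem binExp_sign_eq_binary_digit (t : ℝ) (ht : t ∈ Set.Ico (0 : ℝ) 1)
    (xs : ℕ → ℝ) (h0 : xs 0 = Real.cos (Real.pi * t))
    (hrec : ∀ k, xs (k + 1) = binExpStep (xs k)) :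
    ∀ k, xs k ≤ 0 ↔ Odd ⌊(2 : ℝ) ^ (k + 1) * t⌋ := by
  intro k
  have hx := xs_eq t ht xs h0 hrec k
  set u := Int.fract ((2 : ℝ) ^ k * t) with hu
  have hu0 : 0 ≤ u := Int.fract_nonneg _
  have hu1 : u < 1 := Int.fract_lt_one _
  have hsplit : (2 : ℝ) ^ (k + 1) * t = ((2 * ⌊(2 : ℝ) ^ k * t⌋ : ℤ) : ℝ) + 2 * u := by
    push_cast
    rw [hu, Int.fract]
    ring
  have hfloor : ⌊(2 : ℝ) ^ (k + 1) * t⌋ = 2 * ⌊(2 : ℝ) ^ k * t⌋ + ⌊2 * u⌋ := by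
    rw [hsplit, Int.floor_intCast_add]
  rw [hx, hfloor]
  constructor
  · intro hle
    have hc : 1/2 ≤ u := by
      by_contra hc
      push_neg at hc
      exact absurd hle (not_le.2 (cos_pos_of_lt_half hu0 hc))
    have : ⌊(2:ℝ) * u⌋ = 1 := by
      apply Int.floor_eq_iff.2 <;> norm_num <;> constructor <;> linarith
    rw [this]
    simp [Int.odd_add, parity_simps]
  · intro hodd
    have hb : ⌊(2:ℝ) * u⌋ = 0 ∨ ⌊(2:ℝ) * u⌋ = 1 := by
      have h1 : (0:ℤ) ≤ ⌊(2:ℝ) * u⌋ := Int.floor_nonneg.2 (by linarith)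
      have h2 : ⌊(2:ℝ) * u⌋ < 2 := by
        have : (2:ℝ) * u < 2 := by linarith
        exact_mod_cast Int.floor_lt.2 (by exact_mod_cast this)
      omega
    rcases hb with hb | hb
    · exfalso
      rw [hb] at hodd
      rcases hodd with ⟨m, hm⟩
      omega
    · have : (1:ℝ) ≤ 2 * u := by
        have := Int.floor_le ((2:ℝ) * u)
        rw [hb] at this
        exact_mod_cast this
      exact cos_nonpos_of_half_le (by linarith) hu1
end
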